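/- Let {T^k}_{k∈ℕ} be a sequence of independent Bernoulli random variables with ℙ(T^k = 1) ≥ 1 − δ ≥ 1/2 for all k. Let S^n = ∑_{k=0}^{n−1} T^k and let K be a stopping time for {S^n} with 𝔼[K] < ∞. Then for any γ ∈ (0, 1), ℙ((1 − γ)·K ≥ 2·S^K + γ(1 − γ²)·𝔼[K]) ≤ e^{−γ²·𝔼[K]}. -/

import Mathlib

open MeasureTheory ProbabilityTheory

lemma aux_log_lb {x : ℝ} (hx : 0 < x) : 1 - x⁻¹ ≤ Real.log x := by
  have h := Real.log_le_sub_one_of_pos (inv_pos.mpr hx)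
  rw [Real.log_inv] at h
  linarith

/-- Chernoff bound for stopping times, with `E = 𝔼[K]`. -/
theorem stmt_3 {Ω : Type*} [MeasurableSpace Ω] (μ : Measure Ω) [IsProbabilityMeasure μ]
    (T : ℕ → Ω → ℝ) (hmeas : ∀ k, Measurable (T k))
    (hindep : iIndepFun T μ)
    (hBer : ∀ k ω, T k ω ∈ ({0, 1} : Set ℝ))
    (δ : ℝ) (hδ : 1 - δ ≥ 1 / 2)
    (hp : ∀ k, (μ {ω | T k ω = 1}).toReal ≥ 1 - δ)
    (S : ℕ → Ω → ℝ) (hS : ∀ n ω, S n ω = ∑ k ∈ Finset.range n, T k ω)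
    (K : Ω → ℕ) (hKmeas : Measurable K)
    (hstop : ∀ k n : ℕ, k ≤ n →
      IndepFun (fun ω => Set.indicator {ω' | k < K ω'} (fun _ => (1 : ℝ)) ω) (S n) μ)
    (hKint : Integrable (fun ω => (K ω : ℝ)) μ)
    (γ : ℝ) (hγ : γ ∈ Set.Ioo (0 : ℝ) 1) :
    (μ {ω | (1 - γ) * (K ω : ℝ)
        ≥ 2 * S (K ω) ω + γ * (1 - γ ^ 2) * ∫ ω', (K ω' : ℝ) ∂μ}).toReal
      ≤ Real.exp (-γ ^ 2 * ∫ ω', (K ω' : ℝ) ∂μ) := by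
  obtain ⟨hγ0, hγ1⟩ := hγ
  obtain ⟨E, hEdef⟩ : ∃ E : ℝ, ∫ ω', (K ω' : ℝ) ∂μ = E := ⟨_, rfl⟩
  rw [hEdef]
  have hE0 : 0 ≤ E := hEdef ▸ integral_nonneg fun ω => Nat.cast_nonneg _
  have h1γ : (0:ℝ) < 1 - γ := by linarith
  have h1γ' : (0:ℝ) < 1 + γ := by linarith
  obtain ⟨L, hLdef⟩ : ∃ L : ℝ, L = Real.log ((1+γ)/(1-γ)) := ⟨_, rfl⟩
  have hLsplit : L = Real.log (1+γ) - Real.log (1-γ) := by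
    rw [hLdef]; exact Real.log_div (ne_of_gt h1γ') (ne_of_gt h1γ)
  have hexpL : Real.exp L = (1+γ)/(1-γ) := by
    rw [hLdef]; exact Real.exp_log (by positivity)
  have hlog1p : γ ≤ (1+γ) * Real.log (1+γ) := by
    have h := aux_log_lb h1γ'
    have h2 : (1+γ) * (1 - (1+γ)⁻¹) ≤ (1+γ) * Real.log (1+γ) :=
      mul_le_mul_of_nonneg_left h (le_of_lt h1γ')
    have h3 : (1+γ) * (1 - (1+γ)⁻¹) = γ := by
      field_simp
      ring
    linarith
  have hlog1m : -γ ≤ (1-γ) * Real.log (1-γ) := by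
    have h := aux_log_lb h1γ
    have h2 : (1-γ) * (1 - (1-γ)⁻¹) ≤ (1-γ) * Real.log (1-γ) :=
      mul_le_mul_of_nonneg_left h (le_of_lt h1γ)
    have h3 : (1-γ) * (1 - (1-γ)⁻¹) = -γ := by
      rw [mul_sub, mul_one, mul_inv_cancel₀ (ne_of_gt h1γ)]; ring
    linarith
  have hL0 : 0 ≤ L := by
    rw [hLdef]; exact Real.log_nonneg (by rw [le_div_iff₀ h1γ]; linarith)
  have ha : 0 ≤ L * (1+γ)/2 + Real.log (1-γ) := by
    rw [hLsplit]; nlinarith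
  -- measurability of S
  have hSmeas : ∀ n, Measurable (S n) := by
    intro n
    have h : S n = fun ω => ∑ k ∈ Finset.range n, T k ω := funext (hS n)
    rw [h]
    exact Finset.measurable_sum _ fun k _ => hmeas k
  have hT01 : ∀ k ω, T k ω = 0 ∨ T k ω = 1 := fun k ω => by simpa using hBer k ω
  have hT0 : ∀ k ω, 0 ≤ T k ω := fun k ω => by rcases hT01 k ω with h | h <;> rw [h] <;> norm_num
  have hT1 : ∀ k ω, T k ω ≤ 1 := fun k ω => by rcases hT01 k ω with h | h <;> rw [h] <;> norm_num
  have hTint : ∀ k, Integrable (T k) μ := by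
    intro k
    refine (integrable_const (1:ℝ)).mono' (hmeas k).aestronglyMeasurable (ae_of_all _ fun ω => ?_)
    rw [Real.norm_eq_abs, abs_le]
    exact ⟨by linarith [hT0 k ω], by simpa using hT1 k ω⟩
  have hTmean : ∀ k, 1 - δ ≤ ∫ ω, T k ω ∂μ := by
    intro k
    have hsm : MeasurableSet {ω | T k ω = 1} := (hmeas k) (measurableSet_singleton 1)
    have heq : (fun ω => T k ω) = Set.indicator {ω | T k ω = 1} (1 : Ω → ℝ) := by
      funext ω
      rcases hT01 k ω with h | h <;>
        simp [Set.indicator_apply, Set.mem_setOf_eq, h]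
    calc 1 - δ ≤ (μ {ω | T k ω = 1}).toReal := hp k
      _ = ∫ ω, T k ω ∂μ := by rw [heq, integral_indicator_one hsm, measureReal_def]
  -- the exponential weight functions
  obtain ⟨g, hgdef⟩ : ∃ g : ℕ → Ω → ℝ, g = fun k ω => Real.exp (L * (1 - T k ω)) := ⟨_, rfl⟩
  have hgmeas : ∀ k, Measurable (g k) := by
    intro k
    simp only [hgdef]
    exact Real.measurable_exp.comp (measurable_const.mul (measurable_const.sub (hmeas k)))
  have hgeq : ∀ k ω, g k ω = 1 + (Real.exp L - 1) * (1 - T k ω) := by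
    intro k ω
    rcases hT01 k ω with h | h <;> simp [hgdef, h]
  have hgint : ∀ k, Integrable (g k) μ := by
    intro k
    have h : g k = fun ω => 1 + (Real.exp L - 1) * (1 - T k ω) := funext (hgeq k)
    rw [h]
    exact (integrable_const 1).add (((integrable_const 1).sub (hTint k)).const_mul _)
  have hδhalf : δ ≤ 1/2 := by linarith
  have hexpL1 : 1 ≤ Real.exp L := by rw [hexpL, le_div_iff₀ h1γ]; linarith
  have hgval : ∀ k, ∫ ω, g k ω ∂μ ≤ 1/(1-γ) := by
    intro k
    have hval : ∫ ω, g k ω ∂μ = 1 + (Real.exp L - 1) * (1 - ∫ ω, T k ω ∂μ) := by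
      have hint2 : Integrable (fun ω => (Real.exp L - 1) * (1 - T k ω)) μ :=
        (((integrable_const (1:ℝ)).sub (hTint k)).const_mul _)
      have hint3 : Integrable (fun ω => (1:ℝ) - T k ω) μ := (integrable_const (1:ℝ)).sub (hTint k)
      rw [funext (hgeq k), integral_add (integrable_const _) hint2, integral_const_mul,
        integral_sub (integrable_const 1) (hTint k)]
      simp
    rw [hval]
    have h2 : 1 - ∫ ω, T k ω ∂μ ≤ δ := by linarith [hTmean k]
    have h3 : (Real.exp L - 1) * (1 - ∫ ω, T k ω ∂μ) ≤ (Real.exp L - 1) * δ :=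
      mul_le_mul_of_nonneg_left h2 (by linarith)
    have h4 : 1 + (Real.exp L - 1) * δ ≤ 1/(1-γ) := by
      rw [hexpL, le_div_iff₀ h1γ]
      have hdiv : (1+γ)/(1-γ) * (1-γ) = 1+γ := div_mul_cancel₀ _ (ne_of_gt h1γ)
      have expand : (1 + ((1+γ)/(1-γ) - 1) * δ) * (1-γ)
          = (1-γ) + ((1+γ)/(1-γ)*(1-γ) - (1-γ))*δ := by ring
      rw [expand, hdiv]
      nlinarith [mul_nonneg (le_of_lt hγ0) (by linarith : (0:ℝ) ≤ 1/2 - δ)]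
    linarith
  -- products
  obtain ⟨F, hFdef⟩ : ∃ F : ℕ → Ω → ℝ, F = fun k ω => ∏ i ∈ Finset.range k, g i ω := ⟨_, rfl⟩
  have hFmeas : ∀ k, Measurable (F k) := by
    intro k
    simp only [hFdef]
    exact Finset.measurable_prod _ fun i _ => hgmeas i
  have hg1 : ∀ i ω, 1 ≤ g i ω := by
    intro i ω
    simp only [hgdef]
    calc (1:ℝ) = Real.exp 0 := Real.exp_zero.symm
      _ ≤ Real.exp (L * (1 - T i ω)) :=
        Real.exp_le_exp.mpr (mul_nonneg hL0 (by linarith [hT1 i ω]))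
  have hgle : ∀ i ω, g i ω ≤ Real.exp L := by
    intro i ω
    simp only [hgdef]
    exact Real.exp_le_exp.mpr (by nlinarith [hT0 i ω])
  have hFnn : ∀ k ω, 0 ≤ F k ω := by
    intro k ω
    simp only [hFdef]
    exact Finset.prod_nonneg fun i _ => le_trans zero_le_one (hg1 i ω)
  have hFint : ∀ k, Integrable (F k) μ := by
    intro k
    refine (integrable_const ((Real.exp L)^k)).mono' (hFmeas k).aestronglyMeasurable
      (ae_of_all _ fun ω => ?_)
    rw [Real.norm_eq_abs, abs_of_nonneg (hFnn k ω)]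
    simp only [hFdef]
    calc (fun k ω => ∏ i ∈ Finset.range k, g i ω) k ω ≤ ∏ _i ∈ Finset.range k, Real.exp L :=
          Finset.prod_le_prod (fun i _ => le_trans zero_le_one (hg1 i ω)) (fun i _ => hgle i ω)
      _ = (Real.exp L)^k := by rw [Finset.prod_const, Finset.card_range]
  have hgindep : iIndepFun g μ := by
    simp only [hgdef]
    exact hindep.comp (fun _ x => Real.exp (L * (1 - x)))
      (fun _ => Real.measurable_exp.comp (measurable_const.mul (measurable_const.sub measurable_id)))
  have hFval : ∀ k, ∫ ω, F k ω ∂μ ≤ (1/(1-γ))^k := by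
    intro k
    induction k with
    | zero => simp [hFdef]
    | succ n ih =>
      have hFn : F n = ∏ j ∈ Finset.range n, g j := by
        funext ω; simp only [hFdef]; rw [Finset.prod_apply]
      have hind : IndepFun (F n) (g n) μ := by
        rw [hFn]
        exact hgindep.indepFun_finset_prod_of_notMem hgmeas Finset.notMem_range_self
      have hsplit : ∀ ω, F (n+1) ω = F n ω * g n ω := by
        intro ω; simp only [hFdef]; exact Finset.prod_range_succ _ n
      have hmul : ∫ ω, F (n+1) ω ∂μ = (∫ ω, F n ω ∂μ) * ∫ ω, g n ω ∂μ := by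
        have := hind.integral_mul_eq_mul_integral (hFint n).aestronglyMeasurable (hgint n).aestronglyMeasurable
        calc ∫ ω, F (n+1) ω ∂μ = ∫ ω, (F n * g n) ω ∂μ := by
              congr 1; funext ω; rw [hsplit ω]; rfl
          _ = (∫ ω, F n ω ∂μ) * ∫ ω, g n ω ∂μ := this
      rw [hmul, pow_succ]
      have hFnn' : 0 ≤ ∫ ω, F n ω ∂μ := integral_nonneg fun ω => hFnn n ω
      have hgnn' : 0 ≤ ∫ ω, g n ω ∂μ := integral_nonneg fun ω => le_trans zero_le_one (hg1 n ω)
      exact mul_le_mul ih (hgval n) hgnn' (by positivity)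
  have hFexp : ∀ k ω, F k ω = Real.exp (L * ((k:ℝ) - S k ω)) := by
    intro k ω
    simp only [hFdef, hgdef]
    rw [← Real.exp_sum]
    congr 1
    calc ∑ i ∈ Finset.range k, L * (1 - T i ω)
        = ∑ i ∈ Finset.range k, (L - L * T i ω) := by simp [mul_sub]
      _ = (Finset.range k).card • L - ∑ i ∈ Finset.range k, L * T i ω := by
          rw [Finset.sum_sub_distrib, Finset.sum_const]
      _ = L * ((k:ℝ) - S k ω) := by
          rw [hS k ω, Finset.card_range, nsmul_eq_mul, mul_sub, Finset.mul_sum]; ring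
  -- per-k Chernoff bound
  obtain ⟨c, hcdef⟩ : ∃ c : ℝ, c = γ * (1 - γ ^ 2) * E := ⟨_, rfl⟩
  rw [← hcdef]
  have hmain : ∀ k : ℕ, (μ ((S k) ⁻¹' Set.Iic (((1-γ)*(k:ℝ) - c)/2))).toReal
      ≤ Real.exp (-γ^2 * E) := by
    intro k
    by_cases hk : (k:ℝ) < γ * (1+γ) * E
    · have hempty : (S k) ⁻¹' Set.Iic (((1-γ)*(k:ℝ) - c)/2) = ∅ := by
        ext ω
        simp only [Set.mem_preimage, Set.mem_Iic, Set.mem_empty_iff_false, iff_false, not_le]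
        have hSnn : 0 ≤ S k ω := by
          rw [hS]; exact Finset.sum_nonneg fun i _ => hT0 i ω
        have hceq : c = (1-γ) * (γ * (1+γ) * E) := by rw [hcdef]; ring
        nlinarith only [mul_lt_mul_of_pos_left hk h1γ, hSnn, hceq]
      rw [hempty, measure_empty, ENNReal.toReal_zero]
      exact Real.exp_nonneg _
    · rw [not_lt] at hk
      obtain ⟨m, hmdef⟩ : ∃ m : ℝ, m = ((1-γ)*(k:ℝ) - c)/2 := ⟨_, rfl⟩
      rw [← hmdef]
      obtain ⟨ε, hεdef⟩ : ∃ ε : ℝ, ε = Real.exp (L * ((k:ℝ) - m)) := ⟨_, rfl⟩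
      have hεpos : 0 < ε := hεdef ▸ Real.exp_pos _
      have hsub : (S k) ⁻¹' Set.Iic m ⊆ {ω | ε ≤ F k ω} := by
        intro ω hω
        simp only [Set.mem_preimage, Set.mem_Iic] at hω
        rw [Set.mem_setOf_eq, hFexp k ω, hεdef]
        exact Real.exp_le_exp.mpr (mul_le_mul_of_nonneg_left (by linarith only [hω]) hL0)
      have hmark := mul_meas_ge_le_integral_of_nonneg
        (ae_of_all μ fun ω => hFnn k ω) (hFint k) ε
      have hmono : (μ ((S k)⁻¹' Set.Iic m)).toReal ≤ (μ {ω | ε ≤ F k ω}).toReal :=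
        ENNReal.toReal_mono (measure_ne_top μ _) (measure_mono hsub)
      have hfinal : (μ ((S k)⁻¹' Set.Iic m)).toReal ≤ (1/(1-γ))^k / ε := by
        rw [le_div_iff₀ hεpos]
        calc (μ ((S k)⁻¹' Set.Iic m)).toReal * ε
            ≤ (μ {ω | ε ≤ F k ω}).toReal * ε := mul_le_mul_of_nonneg_right hmono hεpos.le
          _ = ε * (μ {ω | ε ≤ F k ω}).toReal := mul_comm _ _
          _ ≤ ∫ ω, F k ω ∂μ := hmark
          _ ≤ (1/(1-γ))^k := hFval k
      have hbase : (1:ℝ)/(1-γ) = Real.exp (-Real.log (1-γ)) := by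
        rw [Real.exp_neg, Real.exp_log h1γ, one_div]
      have hpow : (1/(1-γ))^k = Real.exp ((k:ℝ) * (-Real.log (1-γ))) := by
        rw [hbase, ← Real.exp_nat_mul]
      have hquot : (1/(1-γ))^k / ε = Real.exp ((k:ℝ) * (-Real.log (1-γ)) - L * ((k:ℝ) - m)) := by
        rw [hpow, hεdef, ← Real.exp_sub]
      have hana : (k:ℝ) * (-Real.log (1-γ)) - L * ((k:ℝ) - m) ≤ -γ^2 * E := by
        have hkm : (k:ℝ) - m = ((1+γ)*(k:ℝ) + c)/2 := by rw [hmdef]; ring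
        have hka : γ*(1+γ)*E * (L*(1+γ)/2 + Real.log (1-γ))
            ≤ (k:ℝ) * (L*(1+γ)/2 + Real.log (1-γ)) :=
          mul_le_mul_of_nonneg_right hk ha
        have hcalc : γ*(1+γ)*E * (L*(1+γ)/2 + Real.log (1-γ)) + L*c/2
            = γ*(1+γ)*E*Real.log (1+γ) := by
          rw [hcdef, hLsplit]; ring
        have hfin : γ^2*E ≤ γ*(1+γ)*E*Real.log (1+γ) := by
          have h5 := mul_le_mul_of_nonneg_left hlog1p (mul_nonneg (le_of_lt hγ0) hE0)
          linarith only [h5]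
        have expand : L * ((k:ℝ) - m) + (k:ℝ)*Real.log (1-γ)
            = (k:ℝ)*(L*(1+γ)/2 + Real.log (1-γ)) + L*c/2 := by rw [hkm]; ring
        linarith only [hka, hcalc, hfin, expand]
      calc (μ ((S k)⁻¹' Set.Iic m)).toReal ≤ (1/(1-γ))^k / ε := hfinal
        _ = Real.exp ((k:ℝ) * (-Real.log (1-γ)) - L * ((k:ℝ) - m)) := hquot
        _ ≤ Real.exp (-γ^2 * E) := Real.exp_le_exp.mpr hana
  -- independence of {K = k} from S k
  have hKgt : ∀ j : ℕ, MeasurableSet {ω | j < K ω} := by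
    intro j
    have h : {ω | j < K ω} = K ⁻¹' (Set.Ioi j) := rfl
    rw [h]; exact hKmeas measurableSet_Ioi
  have hKeq : ∀ j : ℕ, MeasurableSet {ω | K ω = j} := by
    intro j
    have h : {ω | K ω = j} = K ⁻¹' {j} := rfl
    rw [h]; exact hKmeas (measurableSet_singleton j)
  have hindep_event : ∀ (k : ℕ) (B : Set ℝ), MeasurableSet B →
      μ ({ω | K ω = k} ∩ (S k) ⁻¹' B) = μ {ω | K ω = k} * μ ((S k) ⁻¹' B) := by
    intro k B hB
    have hind : ∀ j : ℕ, j ≤ k → μ ({ω | j < K ω} ∩ (S k) ⁻¹' B)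
        = μ {ω | j < K ω} * μ ((S k) ⁻¹' B) := by
      intro j hjk
      have h := (hstop j k hjk).measure_inter_preimage_eq_mul
        {(1:ℝ)} B (measurableSet_singleton (1:ℝ)) hB
      have hpre : (fun ω => Set.indicator {ω' | j < K ω'} (fun _ => (1:ℝ)) ω) ⁻¹' {1}
          = {ω | j < K ω} := by
        ext ω
        simp only [Set.mem_preimage, Set.mem_singleton_iff, Set.indicator_apply,
          Set.mem_setOf_eq]
        by_cases hω : j < K ω <;> simp [hω]
      rwa [hpre] at h
    have hup : μ ({ω | k ≤ K ω} ∩ (S k) ⁻¹' B) = μ {ω | k ≤ K ω} * μ ((S k) ⁻¹' B) := by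
      rcases Nat.eq_zero_or_pos k with hk0 | hkpos
      · subst hk0
        have huniv : {ω | 0 ≤ K ω} = Set.univ := Set.eq_univ_of_forall fun ω => Nat.zero_le _
        rw [huniv, Set.univ_inter, measure_univ, one_mul]
      · have hkk : {ω | k ≤ K ω} = {ω | k - 1 < K ω} := by
          ext ω; simp only [Set.mem_setOf_eq]; omega
        rw [hkk]; exact hind (k-1) (by omega)
    have hsetsplit : {ω | k ≤ K ω} ∩ (S k) ⁻¹' B
        = ({ω | K ω = k} ∩ (S k) ⁻¹' B) ∪ ({ω | k < K ω} ∩ (S k) ⁻¹' B) := by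
      ext ω
      simp only [Set.mem_inter_iff, Set.mem_union, Set.mem_setOf_eq]
      constructor
      · rintro ⟨h1, h2⟩
        rcases eq_or_lt_of_le h1 with h | h
        · exact Or.inl ⟨h.symm, h2⟩
        · exact Or.inr ⟨h, h2⟩
      · rintro (⟨h1, h2⟩ | ⟨h1, h2⟩) <;> exact ⟨by omega, h2⟩
    have hdisj : Disjoint ({ω | K ω = k} ∩ (S k) ⁻¹' B) ({ω | k < K ω} ∩ (S k) ⁻¹' B) := by
      rw [Set.disjoint_left]
      rintro ω ⟨h1, _⟩ ⟨h2, _⟩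
      simp only [Set.mem_setOf_eq] at h1 h2
      omega
    have hmB : MeasurableSet ((S k) ⁻¹' B) := (hSmeas k) hB
    have hsplitμ : μ ({ω | K ω = k} ∩ (S k) ⁻¹' B) + μ ({ω | k < K ω} ∩ (S k) ⁻¹' B)
        = μ ({ω | k ≤ K ω} ∩ (S k) ⁻¹' B) := by
      rw [hsetsplit, measure_union hdisj ((hKgt k).inter hmB)]
    have hsplitK : μ {ω | k ≤ K ω} = μ {ω | K ω = k} + μ {ω | k < K ω} := by
      have hsp : {ω | k ≤ K ω} = {ω | K ω = k} ∪ {ω | k < K ω} := by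
        ext ω; simp only [Set.mem_union, Set.mem_setOf_eq]; omega
      rw [hsp, measure_union ?dd (hKgt k)]
      case dd =>
        rw [Set.disjoint_left]
        rintro ω h1 h2
        simp only [Set.mem_setOf_eq] at h1 h2
        omega
    have heq2 : μ ({ω | K ω = k} ∩ (S k) ⁻¹' B) + μ ({ω | k < K ω} ∩ (S k) ⁻¹' B)
        = μ {ω | K ω = k} * μ ((S k) ⁻¹' B) + μ ({ω | k < K ω} ∩ (S k) ⁻¹' B) := by
      rw [hsplitμ, hup, hsplitK, add_mul, hind k le_rfl]
    exact WithTop.add_right_cancel (measure_ne_top μ _) heq2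
  -- decompose the event
  have hA : {ω | (1 - γ) * (K ω : ℝ) ≥ 2 * S (K ω) ω + c}
      = ⋃ k : ℕ, ({ω | K ω = k} ∩ (S k) ⁻¹' Set.Iic (((1-γ)*(k:ℝ) - c)/2)) := by
    ext ω
    simp only [Set.mem_iUnion, Set.mem_inter_iff, Set.mem_setOf_eq, Set.mem_preimage,
      Set.mem_Iic, ge_iff_le]
    constructor
    · intro h
      exact ⟨K ω, rfl, by linarith only [h]⟩
    · rintro ⟨k, hk, hle⟩
      rw [hk]
      linarith only [hle]
  have hAmeas : ∀ k : ℕ, MeasurableSet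
      ({ω | K ω = k} ∩ (S k) ⁻¹' Set.Iic (((1-γ)*(k:ℝ) - c)/2)) :=
    fun k => (hKeq k).inter ((hSmeas k) measurableSet_Iic)
  have hdisjU : Pairwise (Function.onFun Disjoint fun k : ℕ =>
      {ω | K ω = k} ∩ (S k) ⁻¹' Set.Iic (((1-γ)*(k:ℝ) - c)/2)) := by
    intro i j hij
    rw [Function.onFun, Set.disjoint_left]
    rintro ω ⟨h1, _⟩ ⟨h2, _⟩
    simp only [Set.mem_setOf_eq] at h1 h2
    exact hij (h1.symm.trans h2)
  rw [show {ω | (1 - γ) * (K ω : ℝ) ≥ 2 * S (K ω) ω + c}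
      = ⋃ k : ℕ, ({ω | K ω = k} ∩ (S k) ⁻¹' Set.Iic (((1-γ)*(k:ℝ) - c)/2)) from hA,
    measure_iUnion hdisjU hAmeas]
  refine ENNReal.toReal_le_of_le_ofReal (Real.exp_nonneg _) ?_
  have hterm : ∀ k : ℕ, μ ({ω | K ω = k} ∩ (S k) ⁻¹' Set.Iic (((1-γ)*(k:ℝ) - c)/2))
      ≤ μ {ω | K ω = k} * ENNReal.ofReal (Real.exp (-γ^2 * E)) := by
    intro k
    rw [hindep_event k _ measurableSet_Iic]
    refine mul_le_mul_right ?_ _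
    rw [ENNReal.le_ofReal_iff_toReal_le (measure_ne_top μ _) (Real.exp_nonneg _)]
    exact hmain k
  have hdisjK : Pairwise (Function.onFun Disjoint fun k : ℕ => {ω | K ω = k}) := by
    intro i j hij
    rw [Function.onFun, Set.disjoint_left]
    intro ω h1 h2
    simp only [Set.mem_setOf_eq] at h1 h2
    exact hij (h1.symm.trans h2)
  calc ∑' k : ℕ, μ ({ω | K ω = k} ∩ (S k) ⁻¹' Set.Iic (((1-γ)*(k:ℝ) - c)/2))
      ≤ ∑' k : ℕ, μ {ω | K ω = k} * ENNReal.ofReal (Real.exp (-γ^2*E)) :=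
        ENNReal.tsum_le_tsum hterm
    _ = (∑' k : ℕ, μ {ω | K ω = k}) * ENNReal.ofReal (Real.exp (-γ^2*E)) :=
        ENNReal.tsum_mul_right
    _ ≤ 1 * ENNReal.ofReal (Real.exp (-γ^2*E)) := by
        refine mul_le_mul_left ?_ _
        rw [← measure_iUnion hdisjK hKeq]
        exact prob_le_one
    _ = ENNReal.ofReal (Real.exp (-γ^2*E)) := one_mul _
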